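/- Let F be a regular flow on ℝ² and let s₁, s₂ be two distinct inseparable orbits of F. If there exist p ∈ s₁ and q ∈ s₂ with (p, q) ∈ P_F, then (z, w) ∈ P_F for every z ∈ s₁ and every w ∈ s₂ (so the relation s₁ ≻ s₂ does not depend on the choice of points). -/

import Mathlib

open Set Filter Topology

/-- A (continuous-time) flow on a topological space. -/
def IsFlow {X : Type*} [TopologicalSpace X] (F : ℝ → X → X) : Prop :=
  Continuous (fun q : ℝ × X => F q.1 q.2) ∧ (∀ x, F 0 x = x) ∧
    ∀ t s x, F t (F s x) = F (t + s) x

/-- The forward orbit O⁺(p). -/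
def fwdOrbit {X : Type*} (F : ℝ → X → X) (p : X) : Set X :=
  {q | ∃ t : ℝ, 0 ≤ t ∧ F t p = q}

/-- The backward orbit O⁻(p). -/
def bwdOrbit {X : Type*} (F : ℝ → X → X) (p : X) : Set X :=
  {q | ∃ t : ℝ, t ≤ 0 ∧ F t p = q}

/-- The orbit O(p) = O⁻(p) ∪ O⁺(p). -/
def flowOrbit {X : Type*} (F : ℝ → X → X) (p : X) : Set X :=
  bwdOrbit F p ∪ fwdOrbit F p

/-- The orbit relation O_F. -/
def orbitRel {X : Type*} (F : ℝ → X → X) : Set (X × X) :=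
  {z | z.2 ∈ fwdOrbit F z.1}

/-- The prolongational relation P_F: the closure of the orbit relation. -/
def prolongRel {X : Type*} [TopologicalSpace X] (F : ℝ → X → X) : Set (X × X) :=
  closure (orbitRel F)

/-- Down(p) = {q | (p,q) ∈ P_F}. -/
def downSet {X : Type*} [TopologicalSpace X] (F : ℝ → X → X) (p : X) : Set X :=
  {q | (p, q) ∈ prolongRel F}

/-- The first prolongational limit set Λ¹(p). -/
def lambda1 {X : Type*} [MetricSpace X] (F : ℝ → X → X) (p : X) : Set X :=
  {q | ∀ ε > (0 : ℝ), ∀ T > (0 : ℝ), ∃ x : X, ∃ t : ℝ,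
    T ≤ t ∧ dist x p < ε ∧ dist (F t x) q < ε}

/-- The first prolongation D¹(p). -/
def prolong1 {X : Type*} [MetricSpace X] (F : ℝ → X → X) (p : X) : Set X :=
  {q | ∀ ε > (0 : ℝ), ∃ x : X, ∃ t : ℝ, 0 < t ∧ dist x p < ε ∧ dist (F t x) q < ε}

/-- The set NW_F of non-wandering points. -/
def nonWanderingSet {X : Type*} [MetricSpace X] (F : ℝ → X → X) : Set X :=
  {p | p ∈ lambda1 F p}

/-- A flow is wandering when it has no non-wandering point. -/
def IsWandering {X : Type*} [MetricSpace X] (F : ℝ → X → X) : Prop :=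
  nonWanderingSet F = ∅

/-- The ω-limit set of p. -/
def omegaLimitSet {X : Type*} [TopologicalSpace X] (F : ℝ → X → X) (p : X) : Set X :=
  {q | ∃ t : ℕ → ℝ, Tendsto t atTop atTop ∧ Tendsto (fun n => F (t n) p) atTop (𝓝 q)}

/-- The α-limit set of p. -/
def alphaLimitSet {X : Type*} [TopologicalSpace X] (F : ℝ → X → X) (p : X) : Set X :=
  {q | ∃ t : ℕ → ℝ, Tendsto t atTop atBot ∧ Tendsto (fun n => F (t n) p) atTop (𝓝 q)}

/-- The plane with the Euclidean distance. -/
abbrev Plane := EuclideanSpace ℝ (Fin 2)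

/-- A flow on the plane is regular if near every point it is locally topologically
equivalent to the flow of a constant vector field: there is a homeomorphism of a
neighborhood onto an open set sending the local orbits into horizontal lines. -/
def IsRegularFlow (F : ℝ → Plane → Plane) : Prop :=
  ∀ p : Plane, ∃ U V : Set Plane, IsOpen U ∧ IsOpen V ∧ p ∈ U ∧
    ∃ φ : U ≃ₜ V, ∀ q y : U, (y : Plane) ∈ flowOrbit F (q : Plane) →
      (φ y : Plane) 1 = (φ q : Plane) 1

/-- A set is saturated if it contains the full orbit of each of its points. -/
def FlowSaturated (F : ℝ → Plane → Plane) (A : Set Plane) : Prop :=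
  ∀ p ∈ A, flowOrbit F p ⊆ A

/-- Two (distinct) orbits are inseparable if any two saturated open sets containing
them respectively must intersect. -/
def OrbitsInseparable (F : ℝ → Plane → Plane) (s₁ s₂ : Set Plane) : Prop :=
  ∀ U₁ U₂ : Set Plane, IsOpen U₁ → IsOpen U₂ → FlowSaturated F U₁ → FlowSaturated F U₂ →
    s₁ ⊆ U₁ → s₂ ⊆ U₂ → (U₁ ∩ U₂).Nonempty

/-- s is an orbit of F. -/
def IsOrbit (F : ℝ → Plane → Plane) (s : Set Plane) : Prop :=
  ∃ a : Plane, s = flowOrbit F a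

/-- A separatrix: an orbit inseparable from some other orbit. -/
def IsSeparatrix (F : ℝ → Plane → Plane) (s : Set Plane) : Prop :=
  IsOrbit F s ∧ ∃ s' : Set Plane, IsOrbit F s' ∧ s' ≠ s ∧ OrbitsInseparable F s s'

/-- s₁ ≻ s₂ : the distinct inseparable orbits s₁, s₂ satisfy (p,q) ∈ P_F for some
p ∈ s₁, q ∈ s₂. -/
def OrbPrec (F : ℝ → Plane → Plane) (s₁ s₂ : Set Plane) : Prop :=
  s₁ ≠ s₂ ∧ OrbitsInseparable F s₁ s₂ ∧ ∃ p ∈ s₁, ∃ q ∈ s₂, (p, q) ∈ prolongRel F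


lemma mem_flowOrbit_iff {F : ℝ → Plane → Plane} (hF : IsFlow F) {a x : Plane} :
    x ∈ flowOrbit F a ↔ ∃ t : ℝ, F t a = x := by
  constructor
  · rintro (⟨t, _, ht⟩ | ⟨t, _, ht⟩) <;> exact ⟨t, ht⟩
  · rintro ⟨t, ht⟩
    rcases le_total t 0 with h | h
    · exact Or.inl ⟨t, h, ht⟩
    · exact Or.inr ⟨t, h, ht⟩

lemma flowOrbit_eq_of_mem {F : ℝ → Plane → Plane} (hF : IsFlow F) {a p : Plane}
    (h : p ∈ flowOrbit F a) : flowOrbit F a = flowOrbit F p := by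
  obtain ⟨r, hr⟩ := (mem_flowOrbit_iff hF).1 h
  ext x
  rw [mem_flowOrbit_iff hF, mem_flowOrbit_iff hF]
  constructor
  · rintro ⟨t, ht⟩
    refine ⟨t - r, ?_⟩
    rw [← hr, hF.2.2, sub_add_cancel, ht]
  · rintro ⟨t, ht⟩
    refine ⟨t + r, ?_⟩
    rw [← hF.2.2, hr, ht]

/-- For distinct inseparable orbits, the relation s₁ ≻ s₂ does not depend on the
choice of points: one pair in P_F forces all pairs to be in P_F. -/
theorem stmt_11 (F : ℝ → Plane → Plane) (hF : IsFlow F) (hreg : IsRegularFlow F)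
    (a b : Plane) (hne : flowOrbit F a ≠ flowOrbit F b)
    (hins : OrbitsInseparable F (flowOrbit F a) (flowOrbit F b))
    (p q : Plane) (hp : p ∈ flowOrbit F a) (hq : q ∈ flowOrbit F b)
    (hpq : (p, q) ∈ prolongRel F) :
    ∀ z ∈ flowOrbit F a, ∀ w ∈ flowOrbit F b, (z, w) ∈ prolongRel F := by
  obtain ⟨hcont, h0, hadd⟩ := hF
  intro z hz w hw
  -- express z = F s p, w = F u q
  obtain ⟨r₁, hr₁⟩ := (mem_flowOrbit_iff ⟨hcont, h0, hadd⟩).1 hp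
  obtain ⟨rz, hrz⟩ := (mem_flowOrbit_iff ⟨hcont, h0, hadd⟩).1 hz
  obtain ⟨r₂, hr₂⟩ := (mem_flowOrbit_iff ⟨hcont, h0, hadd⟩).1 hq
  obtain ⟨rw, hrw⟩ := (mem_flowOrbit_iff ⟨hcont, h0, hadd⟩).1 hw
  set s : ℝ := rz - r₁ with hs
  set u : ℝ := rw - r₂ with hu
  have hzp : F s p = z := by rw [← hr₁, hadd, hs, sub_add_cancel, hrz]
  have hwq : F u q = w := by rw [← hr₂, hadd, hu, sub_add_cancel, hrw]
  -- sequence realizing (p,q) in the closure of the orbit relation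
  obtain ⟨x, hxmem, hxlim⟩ := mem_closure_iff_seq_limit.1 hpq
  choose t ht0 htF using hxmem
  have hx1 : Tendsto (fun n => (x n).1) atTop (𝓝 p) :=
    (continuous_fst.tendsto (p, q)).comp hxlim
  have hx2 : Tendsto (fun n => (x n).2) atTop (𝓝 q) :=
    (continuous_snd.tendsto (p, q)).comp hxlim
  by_cases hub : ∀ n : ℕ, ∃ᶠ k in atTop, (n : ℝ) < t k
  · -- times go to infinity along a subsequence
    obtain ⟨φ, hφmono, hφ⟩ := Filter.extraction_forall_of_frequently hub
    have httop : Tendsto (fun n => t (φ n)) atTop atTop :=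
      tendsto_atTop_mono (fun n => (hφ n).le) tendsto_natCast_atTop_atTop
    set y : ℕ → Plane × Plane := fun n => (F s (x (φ n)).1, F u (x (φ n)).2) with hy
    have hG : Continuous fun pr : Plane × Plane => (F s pr.1, F u pr.2) := by
      refine Continuous.prodMk ?_ ?_
      · exact hcont.comp (continuous_const.prodMk continuous_fst)
      · exact hcont.comp (continuous_const.prodMk continuous_snd)
    have hylim : Tendsto y atTop (𝓝 (z, w)) := by
      have h1 : Tendsto (fun n => x (φ n)) atTop (𝓝 (p, q)) :=
        hxlim.comp hφmono.tendsto_atTop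
      have := (hG.tendsto (p, q)).comp h1
      rwa [hzp, hwq] at this
    have hymem : ∀ᶠ n in atTop, y n ∈ orbitRel F := by
      filter_upwards [httop.eventually_ge_atTop (s - u)] with n hn
      refine ⟨u + t (φ n) - s, by linarith, ?_⟩
      show F (u + t (φ n) - s) (F s (x (φ n)).1) = F u (x (φ n)).2
      rw [hadd, ← htF (φ n), hadd]
      ring_nf
    exact mem_closure_of_tendsto hylim hymem
  · -- times bounded: q would be on the orbit of p, contradiction
    exfalso
    push_neg at hub
    obtain ⟨M, hM⟩ := hub
    obtain ⟨N, hN⟩ := eventually_atTop.1 hM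
    have hmem : ∀ n : ℕ, t (n + N) ∈ Set.Icc (0 : ℝ) M :=
      fun n => ⟨ht0 _, hN _ (Nat.le_add_left _ _)⟩
    obtain ⟨t₀, ht₀mem, φ, hφmono, hφlim⟩ := (isCompact_Icc).tendsto_subseq hmem
    have hψ : Tendsto (fun n => φ n + N) atTop atTop :=
      tendsto_atTop_mono (fun n => le_trans hφmono.le_apply (Nat.le_add_right _ _))
        tendsto_id
    have hxψ1 : Tendsto (fun n => (x (φ n + N)).1) atTop (𝓝 p) := hx1.comp hψ
    have hxψ2 : Tendsto (fun n => (x (φ n + N)).2) atTop (𝓝 q) := hx2.comp hψ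
    have hlim1 : Tendsto (fun n => F (t (φ n + N)) (x (φ n + N)).1) atTop (𝓝 (F t₀ p)) :=
      (hcont.tendsto (t₀, p)).comp (hφlim.prodMk_nhds hxψ1)
    have hlim2 : Tendsto (fun n => F (t (φ n + N)) (x (φ n + N)).1) atTop (𝓝 q) := by
      simpa only [htF] using hxψ2
    have hq' : q = F t₀ p := tendsto_nhds_unique hlim2 hlim1
    have hqp : q ∈ flowOrbit F p :=
      (mem_flowOrbit_iff ⟨hcont, h0, hadd⟩).2 ⟨t₀, hq'.symm⟩
    have e1 := flowOrbit_eq_of_mem ⟨hcont, h0, hadd⟩ hp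
    have e2 := flowOrbit_eq_of_mem ⟨hcont, h0, hadd⟩ hq
    have e3 := flowOrbit_eq_of_mem ⟨hcont, h0, hadd⟩ hqp
    exact hne (e1.trans (e3.trans e2.symm))
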